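/- Let a > 0, λ₋ > 0, λ₊ > 0, τ > 0 and β ∈ ℝ be fixed. Then there exists a constant C > 0 (not depending on θ) such that for every θ > 0, ig(θ; a, a/λ₋) · ig(λ₊; a, a/θ) · φ(β; 0, θτ) = C · ig(θ; 2a + 1/2, a/λ₋ + a/λ₊ + β²/(2τ)). In other words, in the caravan hierarchy with θ ∣ λ₋ ∼ IG(a, a/λ₋), λ₊ ∣ θ ∼ IG(a, a/θ) and β ∣ θ, τ ∼ N(0, θτ), the full conditional of an interior chain variable θ given a, β, λ₋, λ₊, τ is IG(2a + 1/2, a/λ₋ + a/λ₊ + β²/(2τ)). -/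

import Mathlib

/-- The normal density with mean `μ` and variance `v`. -/
noncomputable def normalPdf (x μ v : ℝ) : ℝ :=
  (2 * Real.pi * v) ^ (-(1 : ℝ) / 2) * Real.exp (-(x - μ) ^ 2 / (2 * v))

/-- The inverse gamma density with shape `a` and scale `b`. -/
noncomputable def igPdf (x a b : ℝ) : ℝ :=
  b ^ a / Real.Gamma a * x ^ (-a - 1) * Real.exp (-b / x)

/-- In the caravan hierarchy with `θ ∣ λ₋ ∼ IG(a, a/λ₋)`, `λ₊ ∣ θ ∼ IG(a, a/θ)` and
`β ∣ θ, τ ∼ N(0, θτ)`, the full conditional of an interior chain variable `θ` is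
`IG(2a + 1/2, a/λ₋ + a/λ₊ + β²/(2τ))`. -/
theorem caravan_full_conditional_theta_interior
    (a lamm lamp τ : ℝ) (ha : 0 < a) (hlamm : 0 < lamm) (hlamp : 0 < lamp)
    (hτ : 0 < τ) (β : ℝ) :
    ∃ C : ℝ, 0 < C ∧ ∀ θ : ℝ, 0 < θ →
      igPdf θ a (a / lamm) * igPdf lamp a (a / θ) * normalPdf β 0 (θ * τ)
        = C * igPdf θ (2 * a + 1 / 2) (a / lamm + a / lamp + β ^ 2 / (2 * τ)) := by
  have hπ : 0 < Real.pi := Real.pi_pos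
  set b : ℝ := a / lamm + a / lamp + β ^ 2 / (2 * τ) with hbdef
  have hb : 0 < b := by positivity
  have hΓa : 0 < Real.Gamma a := Real.Gamma_pos_of_pos ha
  have hΓ2 : 0 < Real.Gamma (2 * a + 1 / 2) :=
    Real.Gamma_pos_of_pos (by linarith)
  refine ⟨(a / lamm) ^ a * a ^ a * lamp ^ (-a - 1) * (2 * Real.pi * τ) ^ (-(1:ℝ)/2)
      / (Real.Gamma a) ^ 2 * Real.Gamma (2 * a + 1 / 2) / b ^ (2 * a + 1 / 2), ?_, ?_⟩
  · positivity
  · intro θ hθ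
    unfold igPdf normalPdf
    have h1 : (a / θ) ^ a = a ^ a * θ ^ (-a) := by
      rw [Real.div_rpow ha.le hθ.le, Real.rpow_neg hθ.le, div_eq_mul_inv]
    have h2 : (2 * Real.pi * (θ * τ)) ^ (-(1:ℝ)/2)
        = (2 * Real.pi * τ) ^ (-(1:ℝ)/2) * θ ^ (-(1:ℝ)/2) := by
      rw [show 2 * Real.pi * (θ * τ) = (2 * Real.pi * τ) * θ by ring,
        Real.mul_rpow (by positivity) hθ.le]
    have h3 : θ ^ (-(2 * a + 1/2) - 1)
        = θ ^ (-a - 1) * θ ^ (-a) * θ ^ (-(1:ℝ)/2) := by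
      rw [← Real.rpow_add hθ, ← Real.rpow_add hθ]; ring_nf
    have h4 : Real.exp (-b / θ)
        = Real.exp (-(a / lamm) / θ) * Real.exp (-(a / θ) / lamp)
          * Real.exp (-(β - 0) ^ 2 / (2 * (θ * τ))) := by
      rw [← Real.exp_add, ← Real.exp_add]
      congr 1
      rw [hbdef]
      field_simp
      ring
    rw [h1, h2, h3, h4]
    have hbne : b ^ (2 * a + 1 / 2) ≠ 0 := by positivity
    field_simp
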